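/- With P, T, d_T as above and the κ-weight grading on P ∨̂ T by number of κ's: every d_T-closed element of κ-weight one is d_T-exact; more precisely, if λ has κ-weight one and d_T(λ) = 0, then there is a unique ρ of κ-weight zero in P ∨̂ [α] with λ = d_T(ρ). I.e., the κ-weight-one homology of (P ∨̂ T, d_T) vanishes. -/

import Mathlib

section

variable (P : ℕ → Type*) [∀ n, AddCommGroup (P n)]

/-- κ-weight-zero, `a`-α component of arity `n` of `P ∨̂ T`. -/
abbrev E0 (n a : ℕ) := {S : Finset (Fin (n + a)) // S.card = a} → P (n + a)

/-- κ-weight-one, `a`-α component of arity `n` of `P ∨̂ T`. -/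
abbrev E1 (n a : ℕ) :=
  {q : Finset (Fin (n + (a + 1))) × Fin (n + (a + 1)) //
    q.1.card = a ∧ q.2 ∉ q.1} → P (n + (a + 1))

/-- κ-weight-two, `a`-α component of arity `n` of `P ∨̂ T` (the two κ-slots
are recorded in increasing order). -/
abbrev E2 (n a : ℕ) :=
  {t : Finset (Fin (n + (a + 2))) × Fin (n + (a + 2)) × Fin (n + (a + 2)) //
    t.1.card = a ∧ t.2.1 < t.2.2 ∧ t.2.1 ∉ t.1 ∧ t.2.2 ∉ t.1} → P (n + (a + 2))

/-- `d_T` from κ-weight zero to κ-weight one (replace an `α` by `κ`). -/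
def dT0 {n a : ℕ} (lam : E0 P n (a + 1)) : E1 P n a := fun q =>
  lam ⟨insert q.1.2 q.1.1, by
    rw [Finset.card_insert_of_notMem q.2.2, q.2.1]⟩

/-- `d_T` from κ-weight one to κ-weight two (replace one of the `α`'s by `κ`;
the relative Koszul sign of the two orderings of the odd generators `κ` is
`−1`). -/
def dT1 {n a : ℕ} (lam : E1 P n (a + 1)) : E2 P n a := fun t =>
  match t with
  | ⟨(A, c1, c2), hA, hlt, h1, h2⟩ =>
      lam ⟨(insert c2 A, c1), by
          refine ⟨by rw [Finset.card_insert_of_notMem h2, hA], ?_⟩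
          simp only [Finset.mem_insert, not_or]
          exact ⟨Fin.ne_of_lt hlt, h1⟩⟩
        - lam ⟨(insert c1 A, c2), by
          refine ⟨by rw [Finset.card_insert_of_notMem h1, hA], ?_⟩
          simp only [Finset.mem_insert, not_or]
          exact ⟨Fin.ne_of_gt hlt, h2⟩⟩

/-- every `d_T`-closed element of κ-weight one of `P ∨̂ T` is
`d_T`-exact, with a unique κ-weight-zero primitive in `P ∨̂ [α]` of positive
α-filtration: the κ-weight-one homology of `(P ∨̂ T, d_T)` vanishes. -/
lemma E1congr {n a : ℕ} (μ : E1 P n a) {q q' : {q : Finset (Fin (n + (a + 1))) × Fin (n + (a + 1)) //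
    q.1.card = a ∧ q.2 ∉ q.1}} (h : q.1 = q'.1) : μ q = μ q' :=
  congrArg μ (Subtype.ext h)

lemma key {n a : ℕ} (μ : E1 P n (a + 1)) (hμ : dT1 P μ = 0)
    (A : Finset (Fin (n + (a + 2)))) (c1 c2 : Fin (n + (a + 2)))
    (hA : A.card = a) (hlt : c1 < c2) (h1 : c1 ∉ A) (h2 : c2 ∉ A) :
    μ ⟨(insert c2 A, c1), by
        refine ⟨by rw [Finset.card_insert_of_notMem h2, hA], ?_⟩
        simp only [Finset.mem_insert, not_or]
        exact ⟨Fin.ne_of_lt hlt, h1⟩⟩ =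
    μ ⟨(insert c1 A, c2), by
        refine ⟨by rw [Finset.card_insert_of_notMem h1, hA], ?_⟩
        simp only [Finset.mem_insert, not_or]
        exact ⟨Fin.ne_of_gt hlt, h2⟩⟩ := by
  have h := congrFun hμ ⟨(A, c1, c2), hA, hlt, h1, h2⟩
  simp only [dT1, Pi.zero_apply, sub_eq_zero] at h
  exact h

lemma swap {n : ℕ} (lam : ∀ a, E1 P n a)
    (hclosed : ∀ a, dT1 P (lam (a + 1)) = 0) (a : ℕ)
    (S S' : Finset (Fin (n + (a + 1)))) (c c' : Fin (n + (a + 1)))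
    (hS : S.card = a) (hS' : S'.card = a) (hc : c ∉ S) (hc' : c' ∉ S')
    (hT : insert c S = insert c' S') :
    lam a ⟨(S, c), hS, hc⟩ = lam a ⟨(S', c'), hS', hc'⟩ := by
  by_cases hcc : c = c'
  · subst hcc
    have : S = S' := by
      have := congrArg (Finset.erase · c) hT
      simpa [Finset.erase_insert hc, Finset.erase_insert hc'] using this
    subst this; rfl
  · -- c ≠ c', so c' ∈ S and c ∈ S'
    have hc'S : c' ∈ S := by
      have : c' ∈ insert c S := by rw [hT]; exact Finset.mem_insert_self _ _
      rcases Finset.mem_insert.1 this with h | h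
      · exact absurd h.symm hcc
      · exact h
    have hcS' : c ∈ S' := by
      have : c ∈ insert c' S' := by rw [← hT]; exact Finset.mem_insert_self _ _
      rcases Finset.mem_insert.1 this with h | h
      · exact absurd h hcc
      · exact h
    obtain ⟨b, rfl⟩ : ∃ b, a = b + 1 := by
      cases a with
      | zero => exact absurd (Finset.card_eq_zero.1 hS ▸ hc'S) (Finset.notMem_empty _)
      | succ b => exact ⟨b, rfl⟩
    set A : Finset (Fin (n + (b + 2))) := S.erase c' with hAdef
    have hA : A.card = b := by
      rw [hAdef, Finset.card_erase_of_mem hc'S, hS]; omega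
    have hcA : c ∉ A := fun h => hc (Finset.mem_of_mem_erase h)
    have hc'A : c' ∉ A := Finset.notMem_erase _ _
    have hins' : insert c' A = S := Finset.insert_erase hc'S
    have hins : insert c A = S' := by
      have h1 : insert c (insert c' A) = insert c' S' := by rw [hins']; exact hT
      have h2 : insert c' (insert c A) = insert c' S' := by
        rw [Finset.insert_comm]; exact h1
      have := congrArg (Finset.erase · c') h2
      have hcs' : c' ∉ insert c A := by
        simp only [Finset.mem_insert, not_or]
        exact ⟨fun h => hcc h.symm, hc'A⟩
      simpa [Finset.erase_insert hcs', Finset.erase_insert hc'] using this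
    rcases lt_trichotomy c c' with hlt | heq | hgt
    · have := key P (lam (b + 1)) (hclosed b) A c c' hA hlt hcA hc'A
      calc lam (b + 1) ⟨(S, c), hS, hc⟩
          = lam (b + 1) ⟨(insert c' A, c), _⟩ := E1congr P _ (by show Prod.mk S c = (insert c' A, c); rw [hins'])
        _ = lam (b + 1) ⟨(insert c A, c'), _⟩ := this
        _ = lam (b + 1) ⟨(S', c'), hS', hc'⟩ := E1congr P _ (by show Prod.mk (insert c A) c' = (S', c'); rw [hins])
    · exact absurd heq hcc
    · have := key P (lam (b + 1)) (hclosed b) A c' c hA hgt hc'A hcA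
      calc lam (b + 1) ⟨(S, c), hS, hc⟩
          = lam (b + 1) ⟨(insert c' A, c), _⟩ := E1congr P _ (by show Prod.mk S c = (insert c' A, c); rw [hins'])
        _ = lam (b + 1) ⟨(insert c A, c'), _⟩ := this.symm
        _ = lam (b + 1) ⟨(S', c'), hS', hc'⟩ := E1congr P _ (by show Prod.mk (insert c A) c' = (S', c'); rw [hins])

/-- every `d_T`-closed element of κ-weight one of `P ∨̂ T` is
`d_T`-exact, with a unique κ-weight-zero primitive in `P ∨̂ [α]` of positive
α-filtration: the κ-weight-one homology of `(P ∨̂ T, d_T)` vanishes. -/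
theorem stmt_9 (n : ℕ) (lam : ∀ a, E1 P n a)
    (hclosed : ∀ a, dT1 P (lam (a + 1)) = 0) :
    ∃! ρ : ∀ a, E0 P n (a + 1), ∀ a, dT0 P (ρ a) = lam a := by
  have hne : ∀ (a : ℕ) (T : {S : Finset (Fin (n + (a + 1))) // S.card = a + 1}),
      T.1.Nonempty := fun a T => Finset.card_pos.1 (by rw [T.2]; omega)
  refine ⟨fun a T =>
    lam a ⟨(T.1.erase (T.1.min' (hne a T)), T.1.min' (hne a T)), by
      rw [Finset.card_erase_of_mem (T.1.min'_mem (hne a T)), T.2]; rfl,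
      Finset.notMem_erase _ _⟩, ?_, ?_⟩
  · intro a
    funext q
    obtain ⟨⟨S, c⟩, hS, hc⟩ := q
    simp only [dT0]
    exact swap P lam hclosed a _ S _ c
      (by rw [Finset.card_erase_of_mem (Finset.min'_mem _ _),
        Finset.card_insert_of_notMem hc, hS]; omega)
      hS (Finset.notMem_erase _ _) hc
      (Finset.insert_erase (Finset.min'_mem _ _))
  · intro ρ' h'
    funext a T
    obtain ⟨T, hT⟩ := T
    set m := T.min' (hne a ⟨T, hT⟩) with hm
    have hmem : m ∈ T := T.min'_mem _
    have hcm : (T.erase m).card = a := by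
      rw [Finset.card_erase_of_mem hmem, hT]; omega
    have h2 : ρ' a ⟨T, hT⟩ = ρ' a ⟨insert m (T.erase m), by
        rw [Finset.card_insert_of_notMem (Finset.notMem_erase _ _), hcm]⟩ :=
      congrArg (ρ' a) (Subtype.ext (Finset.insert_erase hmem).symm)
    rw [h2]
    exact congrFun (h' a) ⟨(T.erase m, m), hcm, Finset.notMem_erase _ _⟩

end
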